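/- Suppose G and Ĝ are symmetric positive definite matrices with ‖G − Ĝ‖ ≤ ε where ε < (3/4) λ_min(G). Then ‖G^{1/2} − Ĝ^{1/2}‖ ≤ ε / λ_min(G)^{1/2}. -/

import Mathlib

noncomputable def opNorm {d : ℕ} (M : Matrix (Fin d) (Fin d) ℝ) : ℝ :=
  ‖Matrix.toEuclideanCLM (𝕜 := ℝ) M‖

/-- The square root of a positive semidefinite matrix, as `Matrix.PosSemidef.sqrt` was defined
in the older Mathlib. -/
noncomputable def Matrix.PosSemidef.sqrt {n : Type*} [Fintype n] [DecidableEq n]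
    {A : Matrix n n ℝ} (hA : A.PosSemidef) : Matrix n n ℝ :=
  hA.1.eigenvectorUnitary.1 * Matrix.diagonal ((↑) ∘ Real.sqrt ∘ hA.1.eigenvalues) *
    (star hA.1.eigenvectorUnitary : Matrix n n ℝ)

lemma Matrix.PosSemidef.posSemidef_sqrt {n : Type*} [Fintype n] [DecidableEq n]
    {A : Matrix n n ℝ} (hA : A.PosSemidef) : hA.sqrt.PosSemidef := by
  unfold Matrix.PosSemidef.sqrt
  have hD : (Matrix.diagonal ((↑) ∘ Real.sqrt ∘ hA.1.eigenvalues) : Matrix n n ℝ).PosSemidef := by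
    rw [Matrix.posSemidef_diagonal_iff]; intro i; exact Real.sqrt_nonneg _
  have := hD.mul_mul_conjTranspose_same (hA.1.eigenvectorUnitary : Matrix n n ℝ)
  rw [Matrix.star_eq_conjTranspose]
  exact this

lemma Matrix.PosSemidef.sqrt_mul_self {n : Type*} [Fintype n] [DecidableEq n]
    {A : Matrix n n ℝ} (hA : A.PosSemidef) : hA.sqrt * hA.sqrt = A := by
  unfold Matrix.PosSemidef.sqrt
  have key : ∀ (U S D : Matrix n n ℝ), S * U = 1 → U * D * S * (U * D * S) = U * (D * D) * S := by
    intro U S D h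
    calc _ = U * D * (S * U) * (D * S) := by simp only [mul_assoc]
      _ = _ := by rw [h, mul_one]; simp only [mul_assoc]
  rw [key _ _ _ (Unitary.coe_star_mul_self hA.1.eigenvectorUnitary), Matrix.diagonal_mul_diagonal]
  conv_rhs => rw [hA.1.spectral_theorem, Unitary.conjStarAlgAut_apply]
  congr 3
  funext i
  simp [Real.mul_self_sqrt (hA.eigenvalues_nonneg i)]

open scoped InnerProductSpace
open Matrix

namespace Stmt8Aux

variable {d : ℕ}

lemma clm_apply (M : Matrix (Fin d) (Fin d) ℝ) (x : EuclideanSpace ℝ (Fin d)) :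
    Matrix.toEuclideanCLM (𝕜 := ℝ) M x =
      (WithLp.equiv 2 (Fin d → ℝ)).symm (M *ᵥ (WithLp.equiv 2 (Fin d → ℝ) x)) := by
  rw [Equiv.eq_symm_apply]; exact Matrix.ofLp_toEuclideanCLM M x

lemma clm_eigen (M : Matrix (Fin d) (Fin d) ℝ) (hM : M.IsHermitian) (i : Fin d) :
    Matrix.toEuclideanCLM (𝕜 := ℝ) M (hM.eigenvectorBasis i) =
      hM.eigenvalues i • hM.eigenvectorBasis i := by
  rw [clm_apply, Equiv.symm_apply_eq]
  have := hM.mulVec_eigenvectorBasis i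
  simpa using this

lemma selfadj (M : Matrix (Fin d) (Fin d) ℝ) (hM : M.IsHermitian)
    (x y : EuclideanSpace ℝ (Fin d)) :
    ⟪Matrix.toEuclideanCLM (𝕜 := ℝ) M x, y⟫_ℝ = ⟪x, Matrix.toEuclideanCLM (𝕜 := ℝ) M y⟫_ℝ := by
  have hsa : IsSelfAdjoint (Matrix.toEuclideanCLM (𝕜 := ℝ) M) := by
    unfold _root_.IsSelfAdjoint
    rw [← map_star]
    exact congrArg _ hM
  exact (ContinuousLinearMap.isSelfAdjoint_iff_isSymmetric.mp hsa) x y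

lemma inner_repr (b : OrthonormalBasis (Fin d) ℝ (EuclideanSpace ℝ (Fin d)))
    (x y : EuclideanSpace ℝ (Fin d)) :
    ⟪x, y⟫_ℝ = ∑ i, b.repr x i * b.repr y i := by
  rw [← b.repr.inner_map_map x y, PiLp.inner_apply]
  simp [RCLike.inner_apply, mul_comm]

lemma parseval (b : OrthonormalBasis (Fin d) ℝ (EuclideanSpace ℝ (Fin d)))
    (x : EuclideanSpace ℝ (Fin d)) :
    ‖x‖ ^ 2 = ∑ i, (b.repr x i) ^ 2 := by
  rw [← real_inner_self_eq_norm_sq, inner_repr b x x]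
  exact Finset.sum_congr rfl fun i _ => (sq (b.repr x i)).symm

lemma repr_clm (M : Matrix (Fin d) (Fin d) ℝ) (hM : M.IsHermitian)
    (x : EuclideanSpace ℝ (Fin d)) (i : Fin d) :
    hM.eigenvectorBasis.repr (Matrix.toEuclideanCLM (𝕜 := ℝ) M x) i =
      hM.eigenvalues i * hM.eigenvectorBasis.repr x i := by
  rw [OrthonormalBasis.repr_apply_apply, OrthonormalBasis.repr_apply_apply,
    ← selfadj M hM, clm_eigen M hM i, real_inner_smul_left]

lemma quad (M : Matrix (Fin d) (Fin d) ℝ) (hM : M.IsHermitian)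
    (x : EuclideanSpace ℝ (Fin d)) :
    ⟪x, Matrix.toEuclideanCLM (𝕜 := ℝ) M x⟫_ℝ =
      ∑ i, hM.eigenvalues i * (hM.eigenvectorBasis.repr x i) ^ 2 := by
  rw [inner_repr hM.eigenvectorBasis]
  refine Finset.sum_congr rfl fun i _ => ?_
  rw [repr_clm M hM x i]
  ring

lemma quad_ge (M : Matrix (Fin d) (Fin d) ℝ) (hM : M.IsHermitian) (c : ℝ)
    (h : ∀ i, c ≤ hM.eigenvalues i) (x : EuclideanSpace ℝ (Fin d)) :
    c * ‖x‖ ^ 2 ≤ ⟪x, Matrix.toEuclideanCLM (𝕜 := ℝ) M x⟫_ℝ := by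
  rw [quad M hM, parseval hM.eigenvectorBasis, Finset.mul_sum]
  exact Finset.sum_le_sum fun i _ =>
    mul_le_mul_of_nonneg_right (h i) (sq_nonneg _)

lemma norm_le_of_eig (M : Matrix (Fin d) (Fin d) ℝ) (hM : M.IsHermitian) (c : ℝ)
    (hc : 0 ≤ c) (h : ∀ i, |hM.eigenvalues i| ≤ c) :
    ‖Matrix.toEuclideanCLM (𝕜 := ℝ) M‖ ≤ c := by
  refine ContinuousLinearMap.opNorm_le_bound _ hc fun x => ?_
  have h2 : ‖Matrix.toEuclideanCLM (𝕜 := ℝ) M x‖ ^ 2 ≤ (c * ‖x‖) ^ 2 := by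
    rw [parseval hM.eigenvectorBasis, mul_pow, parseval hM.eigenvectorBasis x,
      Finset.mul_sum]
    refine Finset.sum_le_sum fun i _ => ?_
    rw [repr_clm M hM x i, mul_pow]
    refine mul_le_mul_of_nonneg_right ?_ (sq_nonneg _)
    calc hM.eigenvalues i ^ 2 = |hM.eigenvalues i| ^ 2 := (sq_abs _).symm
      _ ≤ c ^ 2 := pow_le_pow_left₀ (abs_nonneg _) (h i) 2
  nlinarith [norm_nonneg (Matrix.toEuclideanCLM (𝕜 := ℝ) M x),
    mul_nonneg hc (norm_nonneg x)]

end Stmt8Aux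

theorem stmt8 {d : ℕ} [NeZero d] (G Ghat : Matrix (Fin d) (Fin d) ℝ)
    (hG : G.PosDef) (hGhat : Ghat.PosDef) (ε : ℝ) (hε : 0 ≤ ε)
    (h1 : opNorm (G - Ghat) ≤ ε)
    (h2 : ε < (3 / 4) * ⨅ i, hG.isHermitian.eigenvalues i) :
    opNorm (hG.posSemidef.sqrt - hGhat.posSemidef.sqrt) ≤
      ε / Real.sqrt (⨅ i, hG.isHermitian.eigenvalues i) := by
  classical
  haveI : Nonempty (Fin d) := Fin.pos_iff_nonempty.mp (Nat.pos_of_ne_zero (NeZero.ne d))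
  set a : ℝ := ⨅ i, hG.isHermitian.eigenvalues i with ha_def
  have ha_le : ∀ i, a ≤ hG.isHermitian.eigenvalues i := fun i =>
    ciInf_le (Set.Finite.bddBelow (Set.finite_range _)) i
  have ha : 0 < a := by
    obtain ⟨i, hi⟩ := exists_eq_ciInf_of_finite (f := hG.isHermitian.eigenvalues)
    rw [← ha_def] at hi
    rw [← hi]
    exact hG.eigenvalues_pos i
  set s : ℝ := Real.sqrt a with hs_def
  have hs : 0 < s := Real.sqrt_pos.mpr ha
  set X := hG.posSemidef.sqrt with hX_def
  set Y := hGhat.posSemidef.sqrt with hY_def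
  have hXpsd : X.PosSemidef := hG.posSemidef.posSemidef_sqrt
  have hYpsd : Y.PosSemidef := hGhat.posSemidef.posSemidef_sqrt
  have hXh : X.IsHermitian := hXpsd.isHermitian
  have hYh : Y.IsHermitian := hYpsd.isHermitian
  have hDh : (X - Y).IsHermitian := hXh.sub hYh
  -- eigenvalues of X are ≥ s
  have hXeig : ∀ j, s ≤ hXh.eigenvalues j := by
    intro j
    set w := hXh.eigenvectorBasis j with hw
    set ν := hXh.eigenvalues j with hν
    have hν0 : 0 ≤ ν := hXpsd.eigenvalues_nonneg j
    have hw1 : ‖w‖ = 1 := hXh.eigenvectorBasis.orthonormal.1 j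
    have hGw : Matrix.toEuclideanCLM (𝕜 := ℝ) G w = (ν ^ 2) • w := by
      have hXX : X * X = G := hG.posSemidef.sqrt_mul_self
      rw [← hXX, _root_.map_mul]
      simp only [ContinuousLinearMap.mul_apply]
      rw [Stmt8Aux.clm_eigen X hXh j, _root_.map_smul, Stmt8Aux.clm_eigen X hXh j,
        smul_smul, ← hν, sq]
    have hq : ⟪w, Matrix.toEuclideanCLM (𝕜 := ℝ) G w⟫_ℝ = ν ^ 2 := by
      rw [hGw, real_inner_smul_right, real_inner_self_eq_norm_sq, hw1]
      ring
    have hq2 := Stmt8Aux.quad_ge G hG.isHermitian a ha_le w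
    rw [hq, hw1] at hq2
    have haν : a ≤ ν ^ 2 := by linarith
    calc s = Real.sqrt a := rfl
      _ ≤ Real.sqrt (ν ^ 2) := Real.sqrt_le_sqrt haν
      _ = ν := by rw [Real.sqrt_sq hν0]
  -- quadratic lower bounds
  have hXq : ∀ v : EuclideanSpace ℝ (Fin d),
      s * ‖v‖ ^ 2 ≤ ⟪v, Matrix.toEuclideanCLM (𝕜 := ℝ) X v⟫_ℝ :=
    Stmt8Aux.quad_ge X hXh s hXeig
  have hYq : ∀ v : EuclideanSpace ℝ (Fin d),
      0 ≤ ⟪v, Matrix.toEuclideanCLM (𝕜 := ℝ) Y v⟫_ℝ := by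
    intro v
    have := Stmt8Aux.quad_ge Y hYh 0 (fun i => hYpsd.eigenvalues_nonneg i) v
    linarith
  -- factorization G - Ghat = X * (X - Y) + (X - Y) * Y
  have hfac : G - Ghat = X * (X - Y) + (X - Y) * Y := by
    have hXX : X * X = G := hG.posSemidef.sqrt_mul_self
    have hYY : Y * Y = Ghat := hGhat.posSemidef.sqrt_mul_self
    rw [← hXX, ← hYY]
    noncomm_ring
  -- eigenvalue bound for D
  have hDeig : ∀ i, |hDh.eigenvalues i| ≤ ε / s := by
    intro i
    set v := hDh.eigenvectorBasis i with hv
    set μ := hDh.eigenvalues i with hμ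
    have hv1 : ‖v‖ = 1 := hDh.eigenvectorBasis.orthonormal.1 i
    set p := ⟪v, Matrix.toEuclideanCLM (𝕜 := ℝ) X v⟫_ℝ with hp
    set q := ⟪v, Matrix.toEuclideanCLM (𝕜 := ℝ) Y v⟫_ℝ with hq
    have hps : s ≤ p := by have := hXq v; rw [hv1] at this; simpa using this
    have hq0 : 0 ≤ q := hYq v
    have hkey : ⟪v, Matrix.toEuclideanCLM (𝕜 := ℝ) (G - Ghat) v⟫_ℝ = μ * (p + q) := by
      rw [hfac, map_add, _root_.map_mul, _root_.map_mul]
      simp only [ContinuousLinearMap.add_apply, ContinuousLinearMap.mul_apply]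
      rw [inner_add_right]
      have e1 : ⟪v, (Matrix.toEuclideanCLM (𝕜 := ℝ) X)
          ((Matrix.toEuclideanCLM (𝕜 := ℝ) (X - Y)) v)⟫_ℝ = μ * p := by
        rw [Stmt8Aux.clm_eigen (X - Y) hDh i, _root_.map_smul, real_inner_smul_right]
      have e2 : ⟪v, (Matrix.toEuclideanCLM (𝕜 := ℝ) (X - Y))
          ((Matrix.toEuclideanCLM (𝕜 := ℝ) Y) v)⟫_ℝ = μ * q := by
        rw [← Stmt8Aux.selfadj (X - Y) hDh, Stmt8Aux.clm_eigen (X - Y) hDh i,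
          real_inner_smul_left]
      rw [e1, e2]
      ring
    have hr : |⟪v, Matrix.toEuclideanCLM (𝕜 := ℝ) (G - Ghat) v⟫_ℝ| ≤ ε := by
      calc |⟪v, Matrix.toEuclideanCLM (𝕜 := ℝ) (G - Ghat) v⟫_ℝ|
          ≤ ‖v‖ * ‖Matrix.toEuclideanCLM (𝕜 := ℝ) (G - Ghat) v‖ := abs_real_inner_le_norm _ _
        _ ≤ ‖v‖ * (‖Matrix.toEuclideanCLM (𝕜 := ℝ) (G - Ghat)‖ * ‖v‖) := by
            gcongr; exact ContinuousLinearMap.le_opNorm _ v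
        _ = ‖Matrix.toEuclideanCLM (𝕜 := ℝ) (G - Ghat)‖ := by rw [hv1]; ring
        _ ≤ ε := h1
    rw [hkey, abs_mul, abs_of_nonneg (by linarith : (0:ℝ) ≤ p + q)] at hr
    rw [le_div_iff₀ hs]
    calc |μ| * s ≤ |μ| * (p + q) := by
          apply mul_le_mul_of_nonneg_left (by linarith) (abs_nonneg μ)
      _ ≤ ε := hr
  exact Stmt8Aux.norm_le_of_eig (X - Y) hDh (ε / s) (div_nonneg hε hs.le) hDeig
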